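/- Ensemble collapse upper bound (upper half of Lemma 3.2): suppose ‖A_t‖ ≤ A_max for all t ≥ 1, that E_0 > 0, and that the step size satisfies h ≤ min(α/(J(A_max + α)²), J/α)·E_0^{-1}. Then for every t ∈ ℕ one has E_t ≤ J/(hα(t+1)), and consequently the sample covariance satisfies C_t ⪯ (J/(hα(t+1)))·I in the Loewner (positive semi-definite) order. -/

import Mathlib

open Matrix BigOperators

noncomputable section

/-- Sample mean of an ensemble. -/
def ensMean {d : ℕ} (J : ℕ) (z : Fin J → Fin d → ℝ) : Fin d → ℝ :=
  (J : ℝ)⁻¹ • ∑ j, z j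

/-- Ensemble spread `e^{(j)} = z^{(j)} - z̄`. -/
def ensSpread {d : ℕ} (J : ℕ) (z : Fin J → Fin d → ℝ) (j : Fin J) : Fin d → ℝ :=
  z j - ensMean J z

/-- Sample covariance `C = (1/J) ∑_j e^{(j)} (e^{(j)})ᵀ`. -/
def ensCov {d : ℕ} (J : ℕ) (z : Fin J → Fin d → ℝ) : Matrix (Fin d) (Fin d) ℝ :=
  (J : ℝ)⁻¹ • ∑ j, vecMulVec (ensSpread J z j) (ensSpread J z j)

/-- Squared Euclidean norm of a vector in `ℝ^d`. -/
def enormSq {d : ℕ} (v : Fin d → ℝ) : ℝ := ∑ i, (v i)^2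

/-- Ensemble spread energy `E = (1/J)∑_j ‖e^{(j)}‖²`. -/
def ensEnergy {d : ℕ} (J : ℕ) (z : Fin J → Fin d → ℝ) : ℝ :=
  (J : ℝ)⁻¹ * ∑ j, enormSq (ensSpread J z j)

/-- The (Euclidean) operator norm of a square matrix. -/
def opNorm {d : ℕ} (M : Matrix (Fin d) (Fin d) ℝ) : ℝ :=
  ‖Matrix.toEuclideanCLM (𝕜 := ℝ) M‖

namespace DEKIaux
variable {d p J : ℕ}

lemma enormSq_nonneg (v : Fin d → ℝ) : 0 ≤ enormSq v :=
  Finset.sum_nonneg fun _ _ => sq_nonneg _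

lemma energy_nonneg (z : Fin J → Fin d → ℝ) : 0 ≤ ensEnergy J z :=
  mul_nonneg (by positivity) (Finset.sum_nonneg fun j _ => enormSq_nonneg _)

lemma dot_sq_le (v w : Fin d → ℝ) : (v ⬝ᵥ w)^2 ≤ enormSq v * enormSq w := by
  simpa [dotProduct, enormSq] using Finset.sum_mul_sq_le_sq_mul_sq Finset.univ v w

lemma dot_sum (x : Fin d → ℝ) (y : Fin J → Fin d → ℝ) :
    x ⬝ᵥ (∑ k, y k) = ∑ k, x ⬝ᵥ y k := by
  simp only [dotProduct, Finset.sum_apply, Finset.mul_sum]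
  exact Finset.sum_comm

lemma cov_mulVec (e : Fin J → Fin d → ℝ) (x : Fin d → ℝ) :
    (((J:ℝ)⁻¹ • ∑ j, vecMulVec (e j) (e j)) *ᵥ x)
      = (J:ℝ)⁻¹ • ∑ k, (e k ⬝ᵥ x) • e k := by
  funext i
  simp only [Matrix.mulVec, dotProduct, Matrix.smul_apply, Matrix.sum_apply,
    vecMulVec_apply, Pi.smul_apply, Finset.sum_apply, smul_eq_mul, Finset.sum_mul,
    Finset.mul_sum]
  rw [Finset.sum_comm]
  exact Finset.sum_congr rfl fun j _ => Finset.sum_congr rfl fun k _ => by ring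

lemma dot_cov_mulVec (e : Fin J → Fin d → ℝ) (x w : Fin d → ℝ) :
    x ⬝ᵥ (((J:ℝ)⁻¹ • ∑ j, vecMulVec (e j) (e j)) *ᵥ w)
      = (J:ℝ)⁻¹ * ∑ k, (e k ⬝ᵥ w) * (x ⬝ᵥ e k) := by
  rw [cov_mulVec, dotProduct_smul, dot_sum, smul_eq_mul]
  congr 1
  exact Finset.sum_congr rfl fun k _ => by rw [dotProduct_smul, smul_eq_mul]

lemma gram_sum_nonneg (f : Fin J → Fin d → ℝ) (g : Fin J → Fin p → ℝ) :
    0 ≤ ∑ j, ∑ k, (f j ⬝ᵥ f k) * (g j ⬝ᵥ g k) := by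
  have key : ∑ j, ∑ k, (f j ⬝ᵥ f k) * (g j ⬝ᵥ g k)
      = ∑ a : Fin d, ∑ b : Fin p, (∑ j, f j a * g j b)^2 :=
    calc ∑ j, ∑ k, (f j ⬝ᵥ f k) * (g j ⬝ᵥ g k)
        = ∑ j, ∑ k, ∑ a : Fin d, ∑ b : Fin p, (f j a * g j b) * (f k a * g k b) := by
          refine Finset.sum_congr rfl fun j _ => Finset.sum_congr rfl fun k _ => ?_
          rw [dotProduct, dotProduct, Finset.sum_mul_sum]
          exact Finset.sum_congr rfl fun a _ => Finset.sum_congr rfl fun b _ => by ring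
      _ = ∑ j, ∑ a : Fin d, ∑ k, ∑ b : Fin p, (f j a * g j b) * (f k a * g k b) :=
          Finset.sum_congr rfl fun j _ => Finset.sum_comm
      _ = ∑ a : Fin d, ∑ j, ∑ k, ∑ b : Fin p, (f j a * g j b) * (f k a * g k b) :=
          Finset.sum_comm
      _ = ∑ a : Fin d, ∑ j, ∑ b : Fin p, ∑ k, (f j a * g j b) * (f k a * g k b) :=
          Finset.sum_congr rfl fun a _ => Finset.sum_congr rfl fun j _ => Finset.sum_comm
      _ = ∑ a : Fin d, ∑ b : Fin p, ∑ j, ∑ k, (f j a * g j b) * (f k a * g k b) :=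
          Finset.sum_congr rfl fun a _ => Finset.sum_comm
      _ = ∑ a : Fin d, ∑ b : Fin p, (∑ j, f j a * g j b)^2 := by
          refine Finset.sum_congr rfl fun a _ => Finset.sum_congr rfl fun b _ => ?_
          rw [sq, Finset.sum_mul_sum]
  rw [key]
  exact Finset.sum_nonneg fun a _ => Finset.sum_nonneg fun b _ => sq_nonneg _

lemma enormSq_sub_smul (a b : Fin d → ℝ) (h : ℝ) :
    enormSq (a - h • b) = enormSq a - 2*h*(a ⬝ᵥ b) + h^2 * enormSq b := by
  simp only [enormSq, dotProduct, Pi.sub_apply, Pi.smul_apply, smul_eq_mul,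
    Finset.mul_sum, ← Finset.sum_add_distrib, ← Finset.sum_sub_distrib]
  exact Finset.sum_congr rfl fun i _ => by ring

lemma enormSq_eq_norm_sq (v : Fin d → ℝ) :
    enormSq v = ‖(WithLp.equiv 2 (Fin d → ℝ)).symm v‖^2 := by
  rw [EuclideanSpace.norm_eq, Real.sq_sqrt (by positivity)]
  simp [enormSq, WithLp.equiv_symm_apply, PiLp.toLp_apply, sq_abs]

lemma norm_symm_mulVec_le (A : Matrix (Fin d) (Fin d) ℝ) (v : Fin d → ℝ) :
    ‖(WithLp.equiv 2 (Fin d → ℝ)).symm (A *ᵥ v)‖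
      ≤ opNorm A * ‖(WithLp.equiv 2 (Fin d → ℝ)).symm v‖ := by
  have h := (Matrix.toEuclideanCLM (𝕜 := ℝ) A).le_opNorm ((WithLp.equiv 2 (Fin d → ℝ)).symm v)
  rwa [WithLp.equiv_symm_apply, Matrix.toEuclideanCLM_toLp] at h

lemma enormSq_reg_le {α Amax : ℝ} (hα : 0 < α)
    (S : Matrix (Fin p) (Fin d) ℝ) (hS : opNorm (Sᵀ * S) ≤ Amax) (v : Fin d → ℝ) :
    enormSq (Sᵀ *ᵥ (S *ᵥ v) + α • v) ≤ (Amax + α)^2 * enormSq v := by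
  have h1 : Sᵀ *ᵥ (S *ᵥ v) = (Sᵀ * S) *ᵥ v := Matrix.mulVec_mulVec v Sᵀ S
  set F := (WithLp.equiv 2 (Fin d → ℝ)).symm with hF
  have hadd : F ((Sᵀ * S) *ᵥ v + α • v) = F ((Sᵀ * S) *ᵥ v) + α • F v := by
    rw [hF, WithLp.equiv_symm_apply, WithLp.toLp_add, WithLp.toLp_smul]
  have hnorm : ‖F ((Sᵀ * S) *ᵥ v + α • v)‖ ≤ (Amax + α) * ‖F v‖ := by
    rw [hadd]
    calc ‖F ((Sᵀ * S) *ᵥ v) + α • F v‖ ≤ ‖F ((Sᵀ * S) *ᵥ v)‖ + ‖α • F v‖ := norm_add_le _ _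
    _ ≤ Amax * ‖F v‖ + α * ‖F v‖ := by
        have := le_trans (norm_symm_mulVec_le (Sᵀ * S) v)
          (mul_le_mul_of_nonneg_right hS (norm_nonneg _))
        rw [norm_smul, Real.norm_eq_abs, abs_of_pos hα]
        exact add_le_add this le_rfl
    _ = (Amax + α) * ‖F v‖ := by ring
  rw [h1, enormSq_eq_norm_sq, enormSq_eq_norm_sq]
  calc ‖F ((Sᵀ * S) *ᵥ v + α • v)‖^2 ≤ ((Amax + α) * ‖F v‖)^2 :=
        pow_le_pow_left₀ (norm_nonneg _) hnorm 2
  _ = (Amax + α)^2 * ‖F v‖^2 := by ring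

lemma spread_affine (hJ : 0 < J) (h : ℝ) (L : (Fin d → ℝ) →ₗ[ℝ] (Fin d → ℝ)) (c : Fin d → ℝ)
    (zt zt1 : Fin J → Fin d → ℝ)
    (hupd : ∀ j, zt1 j = zt j - h • L (zt j) + h • c) (j : Fin J) :
    ensSpread J zt1 j = ensSpread J zt j - h • L (ensSpread J zt j) := by
  have hJR : (J:ℝ) ≠ 0 := Nat.cast_ne_zero.mpr hJ.ne'
  have hmean : ensMean J zt1 = ensMean J zt - h • L (ensMean J zt) + h • c := by
    unfold ensMean
    simp only [hupd]
    rw [Finset.sum_add_distrib, Finset.sum_sub_distrib, smul_add, smul_sub]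
    congr 1
    · congr 1
      rw [← Finset.smul_sum, ← map_sum, smul_comm ((J:ℝ)⁻¹) h, _root_.map_smul]
    · rw [Finset.sum_const, Finset.card_univ, Fintype.card_fin,
        ← Nat.cast_smul_eq_nsmul (R := ℝ), smul_smul, inv_mul_cancel₀ hJR, one_smul]
  unfold ensSpread
  rw [hupd j, hmean, map_sub, smul_sub]
  abel

lemma spread_update (hJ : 0 < J) (α h : ℝ)
    (S : Matrix (Fin p) (Fin d) ℝ) (u : Fin p → ℝ) (zt zt1 : Fin J → Fin d → ℝ)
    (C : Matrix (Fin d) (Fin d) ℝ)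
    (hupd : ∀ j, zt1 j = zt j - h • (C *ᵥ (Sᵀ *ᵥ (S *ᵥ zt j - u) + α • zt j))) (j : Fin J) :
    ensSpread J zt1 j = ensSpread J zt j -
      h • (C *ᵥ (Sᵀ *ᵥ (S *ᵥ ensSpread J zt j) + α • ensSpread J zt j)) := by
  set L : (Fin d → ℝ) →ₗ[ℝ] (Fin d → ℝ) := (C * (Sᵀ * S + α • 1)).mulVecLin with hL
  have hLv : ∀ v : Fin d → ℝ, L v = C *ᵥ (Sᵀ *ᵥ (S *ᵥ v) + α • v) := by
    intro v
    rw [hL, Matrix.mulVecLin_apply, ← Matrix.mulVec_mulVec, Matrix.add_mulVec,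
      Matrix.smul_mulVec, Matrix.one_mulVec, ← Matrix.mulVec_mulVec]
  have hupd' : ∀ k, zt1 k = zt k - h • L (zt k) + h • (C *ᵥ (Sᵀ *ᵥ u)) := by
    intro k
    rw [hupd k, hLv]
    simp only [Matrix.mulVec_sub, Matrix.mulVec_add, Matrix.mulVec_smul, smul_sub, smul_add]
    abel
  rw [spread_affine hJ h L (C *ᵥ (Sᵀ *ᵥ u)) zt zt1 hupd' j, hLv]

/-- The one-step energy recursion bound. -/
lemma energy_step (hJ : 0 < J) {α h Amax : ℝ} (hα : 0 < α) (hh : 0 < h)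
    (S : Matrix (Fin p) (Fin d) ℝ) (hS : opNorm (Sᵀ * S) ≤ Amax)
    (zt zt1 : Fin J → Fin d → ℝ)
    (hsp : ∀ j, ensSpread J zt1 j = ensSpread J zt j -
      h • (ensCov J zt *ᵥ (Sᵀ *ᵥ (S *ᵥ ensSpread J zt j) + α • ensSpread J zt j))) :
    ensEnergy J zt1 ≤ ensEnergy J zt - 2*h*α*(ensEnergy J zt)^2/J
      + h^2*(Amax+α)^2*(ensEnergy J zt)^3 := by
  have hJR : (0:ℝ) < (J:ℝ) := Nat.cast_pos.mpr hJ
  set e : Fin J → Fin d → ℝ := ensSpread J zt with he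
  set N : Fin J → Fin d → ℝ := fun j => Sᵀ *ᵥ (S *ᵥ e j) + α • e j with hN
  set E : ℝ := ensEnergy J zt with hE
  have hEsum : ∑ j, enormSq (e j) = (J:ℝ) * E := by
    rw [hE, ensEnergy, ← mul_assoc, mul_inv_cancel₀ hJR.ne', one_mul]
  have hE0 : 0 ≤ E := by
    rw [hE, ensEnergy]
    exact mul_nonneg (by positivity) (Finset.sum_nonneg fun j _ => enormSq_nonneg _)
  have hCov : ensCov J zt = (J:ℝ)⁻¹ • ∑ j, vecMulVec (e j) (e j) := rfl
  -- T1 lower bound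
  have hT1 : α * E^2 ≤ ∑ j, e j ⬝ᵥ (ensCov J zt *ᵥ N j) := by
    have perj : ∀ j, e j ⬝ᵥ (ensCov J zt *ᵥ N j)
        = (J:ℝ)⁻¹ * ∑ k, (((S *ᵥ e j) ⬝ᵥ (S *ᵥ e k)) * (e j ⬝ᵥ e k)
            + α * (e j ⬝ᵥ e k)^2) := by
      intro j
      rw [hCov, dot_cov_mulVec]
      congr 1
      refine Finset.sum_congr rfl fun k _ => ?_
      have hdot : e k ⬝ᵥ N j = (S *ᵥ e k) ⬝ᵥ (S *ᵥ e j) + α * (e k ⬝ᵥ e j) := by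
        rw [hN]
        rw [dotProduct_add, Matrix.dotProduct_mulVec, Matrix.vecMul_transpose,
          dotProduct_smul, smul_eq_mul]
      rw [hdot, dotProduct_comm (e j) (e k), dotProduct_comm (S *ᵥ e j) (S *ᵥ e k), sq]
      ring
    have expand : ∑ j, e j ⬝ᵥ (ensCov J zt *ᵥ N j)
        = (J:ℝ)⁻¹ * ((∑ j, ∑ k, ((S *ᵥ e j) ⬝ᵥ (S *ᵥ e k)) * (e j ⬝ᵥ e k))
            + α * ∑ j, ∑ k, (e j ⬝ᵥ e k)^2) := by
      calc ∑ j, e j ⬝ᵥ (ensCov J zt *ᵥ N j)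
          = ∑ j, (J:ℝ)⁻¹ * ∑ k, (((S *ᵥ e j) ⬝ᵥ (S *ᵥ e k)) * (e j ⬝ᵥ e k)
            + α * (e j ⬝ᵥ e k)^2) := Finset.sum_congr rfl fun j _ => perj j
        _ = (J:ℝ)⁻¹ * ∑ j, ∑ k, (((S *ᵥ e j) ⬝ᵥ (S *ᵥ e k)) * (e j ⬝ᵥ e k)
            + α * (e j ⬝ᵥ e k)^2) := by rw [← Finset.mul_sum]
        _ = (J:ℝ)⁻¹ * ((∑ j, ∑ k, ((S *ᵥ e j) ⬝ᵥ (S *ᵥ e k)) * (e j ⬝ᵥ e k))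
            + α * ∑ j, ∑ k, (e j ⬝ᵥ e k)^2) := by
              congr 1
              rw [Finset.mul_sum, ← Finset.sum_add_distrib]
              refine Finset.sum_congr rfl fun j _ => ?_
              rw [Finset.mul_sum, ← Finset.sum_add_distrib]
    rw [expand]
    have hG : 0 ≤ ∑ j, ∑ k, ((S *ᵥ e j) ⬝ᵥ (S *ᵥ e k)) * (e j ⬝ᵥ e k) := by
      have := gram_sum_nonneg (fun j => S *ᵥ e j) e
      simpa using this
    have hQ : (J:ℝ) * E^2 ≤ ∑ j, ∑ k, (e j ⬝ᵥ e k)^2 := by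
      have h1 : ∑ j, (enormSq (e j))^2 ≤ ∑ j, ∑ k, (e j ⬝ᵥ e k)^2 := by
        refine Finset.sum_le_sum fun j _ => ?_
        have : (e j ⬝ᵥ e j)^2 ≤ ∑ k, (e j ⬝ᵥ e k)^2 :=
          Finset.single_le_sum (f := fun k => (e j ⬝ᵥ e k)^2)
            (fun k _ => sq_nonneg _) (Finset.mem_univ j)
        have hee : e j ⬝ᵥ e j = enormSq (e j) := by simp [dotProduct, enormSq, sq]
        rwa [hee] at this
      have h2 : ((J:ℝ)*E)^2 ≤ (J:ℝ) * ∑ j, (enormSq (e j))^2 := by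
        rw [← hEsum]
        have := sq_sum_le_card_mul_sum_sq (s := (Finset.univ : Finset (Fin J)))
          (f := fun j => enormSq (e j))
        simpa using this
      nlinarith [hJR]
    calc α * E^2 = (J:ℝ)⁻¹ * (0 + α * ((J:ℝ) * E^2)) := by
          field_simp
          try ring
        _ ≤ (J:ℝ)⁻¹ * ((∑ j, ∑ k, ((S *ᵥ e j) ⬝ᵥ (S *ᵥ e k)) * (e j ⬝ᵥ e k))
            + α * ∑ j, ∑ k, (e j ⬝ᵥ e k)^2) := by
          have : (0:ℝ) + α * ((J:ℝ) * E^2) ≤ (∑ j, ∑ k, ((S *ᵥ e j) ⬝ᵥ (S *ᵥ e k)) * (e j ⬝ᵥ e k))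
            + α * ∑ j, ∑ k, (e j ⬝ᵥ e k)^2 := by
            have := mul_le_mul_of_nonneg_left hQ hα.le
            exact add_le_add hG this
          exact mul_le_mul_of_nonneg_left this (by positivity)
  -- T2 upper bound
  have hT2 : ∀ j, enormSq (ensCov J zt *ᵥ N j) ≤ (Amax+α)^2 * E^2 * enormSq (e j) := by
    intro j
    have hCN : ensCov J zt *ᵥ N j = (J:ℝ)⁻¹ • ∑ k, (e k ⬝ᵥ N j) • e k := by
      rw [hCov, cov_mulVec]
    have step1 : enormSq (ensCov J zt *ᵥ N j)
        ≤ (J:ℝ)⁻¹^2 * ((∑ k, (e k ⬝ᵥ N j)^2) * ∑ k, enormSq (e k)) := by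
      rw [hCN]
      have : ∀ i, ((((J:ℝ)⁻¹ • ∑ k, (e k ⬝ᵥ N j) • e k)) i)^2
          ≤ (J:ℝ)⁻¹^2 * ((∑ k, (e k ⬝ᵥ N j)^2) * ∑ k, (e k i)^2) := by
        intro i
        have hcs := Finset.sum_mul_sq_le_sq_mul_sq Finset.univ
          (fun k => e k ⬝ᵥ N j) (fun k => e k i)
        have happ : (((J:ℝ)⁻¹ • ∑ k, (e k ⬝ᵥ N j) • e k)) i
            = (J:ℝ)⁻¹ * ∑ k, (e k ⬝ᵥ N j) * e k i := by
          simp [Finset.sum_apply, Finset.mul_sum]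
        rw [happ, mul_pow]
        exact mul_le_mul_of_nonneg_left hcs (by positivity)
      calc enormSq (((J:ℝ)⁻¹ • ∑ k, (e k ⬝ᵥ N j) • e k))
          ≤ ∑ i, (J:ℝ)⁻¹^2 * ((∑ k, (e k ⬝ᵥ N j)^2) * ∑ k, (e k i)^2) :=
            Finset.sum_le_sum fun i _ => this i
        _ = (J:ℝ)⁻¹^2 * ((∑ k, (e k ⬝ᵥ N j)^2) * ∑ k, enormSq (e k)) := by
            rw [← Finset.mul_sum, ← Finset.mul_sum]
            congr 1
            congr 1
            rw [show ∑ i : Fin d, ∑ k, (e k i)^2 = ∑ k, ∑ i : Fin d, (e k i)^2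
              from Finset.sum_comm]
            exact Finset.sum_congr rfl fun k _ => rfl
    have step2 : ∑ k, (e k ⬝ᵥ N j)^2 ≤ (Amax+α)^2 * enormSq (e j) * ((J:ℝ) * E) := by
      rw [← hEsum, Finset.mul_sum]
      refine Finset.sum_le_sum fun k _ => ?_
      calc (e k ⬝ᵥ N j)^2 ≤ enormSq (e k) * enormSq (N j) := dot_sq_le _ _
        _ ≤ enormSq (e k) * ((Amax + α)^2 * enormSq (e j)) :=
            mul_le_mul_of_nonneg_left (enormSq_reg_le hα S hS (e j)) (enormSq_nonneg _)
        _ = (Amax+α)^2 * enormSq (e j) * enormSq (e k) := by ring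
    calc enormSq (ensCov J zt *ᵥ N j)
        ≤ (J:ℝ)⁻¹^2 * ((∑ k, (e k ⬝ᵥ N j)^2) * ∑ k, enormSq (e k)) := step1
      _ ≤ (J:ℝ)⁻¹^2 * (((Amax+α)^2 * enormSq (e j) * ((J:ℝ) * E)) * ((J:ℝ) * E)) := by
          rw [hEsum]
          refine mul_le_mul_of_nonneg_left ?_ (by positivity)
          exact mul_le_mul_of_nonneg_right step2 (by positivity)
      _ = (Amax+α)^2 * E^2 * enormSq (e j) := by
          field_simp
          try ring
  -- combine
  have hexp : ensEnergy J zt1 = E - 2*h*((J:ℝ)⁻¹ * ∑ j, e j ⬝ᵥ (ensCov J zt *ᵥ N j))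
      + h^2 * ((J:ℝ)⁻¹ * ∑ j, enormSq (ensCov J zt *ᵥ N j)) := by
    rw [ensEnergy]
    have : ∀ j, enormSq (ensSpread J zt1 j)
        = enormSq (e j) - 2*h*(e j ⬝ᵥ (ensCov J zt *ᵥ N j))
          + h^2 * enormSq (ensCov J zt *ᵥ N j) := by
      intro j
      rw [hsp j, enormSq_sub_smul]
    simp only [this]
    rw [Finset.sum_add_distrib, Finset.sum_sub_distrib, mul_add, mul_sub]
    rw [hE, ensEnergy]
    congr 1
    · congr 1
      rw [← Finset.mul_sum]
      ring
    · rw [← Finset.mul_sum]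
      ring
  rw [hexp]
  have hb1 : 2*h*((J:ℝ)⁻¹ * ∑ j, e j ⬝ᵥ (ensCov J zt *ᵥ N j)) ≥ 2*h*α*E^2/J := by
    rw [ge_iff_le, div_le_iff₀ hJR]
    have := mul_le_mul_of_nonneg_left hT1 (by positivity : (0:ℝ) ≤ 2*h)
    calc 2*h*α*E^2 = 2*h*(α*E^2) := by ring
      _ ≤ 2*h*(∑ j, e j ⬝ᵥ (ensCov J zt *ᵥ N j)) := this
      _ = 2 * h * ((J:ℝ)⁻¹ * ∑ j, e j ⬝ᵥ (ensCov J zt *ᵥ N j)) * (J:ℝ) := by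
          field_simp
          try ring
  have hb2 : h^2 * ((J:ℝ)⁻¹ * ∑ j, enormSq (ensCov J zt *ᵥ N j))
      ≤ h^2*(Amax+α)^2*E^3 := by
    have hsum : ∑ j, enormSq (ensCov J zt *ᵥ N j) ≤ (Amax+α)^2 * E^2 * ((J:ℝ)*E) := by
      rw [← hEsum, Finset.mul_sum]
      exact Finset.sum_le_sum fun j _ => hT2 j
    calc h^2 * ((J:ℝ)⁻¹ * ∑ j, enormSq (ensCov J zt *ᵥ N j))
        ≤ h^2 * ((J:ℝ)⁻¹ * ((Amax+α)^2 * E^2 * ((J:ℝ)*E))) := by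
          refine mul_le_mul_of_nonneg_left ?_ (by positivity)
          exact mul_le_mul_of_nonneg_left hsum (by positivity)
      _ = h^2*(Amax+α)^2*E^3 := by field_simp; try ring
  linarith [hb1, hb2]


lemma cov_psd_bound (hJ : 0 < J) (zt : Fin J → Fin d → ℝ) {c : ℝ}
    (hc : ensEnergy J zt ≤ c) :
    (c • (1 : Matrix (Fin d) (Fin d) ℝ) - ensCov J zt).PosSemidef := by
  have hJR : (0:ℝ) < (J:ℝ) := Nat.cast_pos.mpr hJ
  set e : Fin J → Fin d → ℝ := ensSpread J zt with he
  refine Matrix.PosSemidef.of_dotProduct_mulVec_nonneg ?_ ?_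
  · -- Hermitian
    have hC : (ensCov J zt)ᴴ = ensCov J zt := by
      ext i j
      simp only [ensCov, Matrix.conjTranspose_apply, Matrix.smul_apply, Matrix.sum_apply,
        vecMulVec_apply, star_trivial, smul_eq_mul]
      congr 1
      exact Finset.sum_congr rfl fun k _ => mul_comm _ _
    show (c • (1 : Matrix (Fin d) (Fin d) ℝ) - ensCov J zt)ᴴ = _
    rw [Matrix.conjTranspose_sub, hC, Matrix.conjTranspose_smul, Matrix.conjTranspose_one,
      star_trivial]
  · intro x
    have hsx : star x = x := by
      funext i; simp
    rw [hsx]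
    have hq : x ⬝ᵥ ((c • (1 : Matrix (Fin d) (Fin d) ℝ) - ensCov J zt) *ᵥ x)
        = c * enormSq x - x ⬝ᵥ (ensCov J zt *ᵥ x) := by
      rw [Matrix.sub_mulVec, dotProduct_sub, Matrix.smul_mulVec, Matrix.one_mulVec,
        dotProduct_smul, smul_eq_mul]
      congr 2
      simp [dotProduct, enormSq, sq]
    rw [hq]
    have hxC : x ⬝ᵥ (ensCov J zt *ᵥ x) = (J:ℝ)⁻¹ * ∑ k, (e k ⬝ᵥ x)^2 := by
      rw [show ensCov J zt = (J:ℝ)⁻¹ • ∑ j, vecMulVec (e j) (e j) from rfl, dot_cov_mulVec]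
      congr 1
      exact Finset.sum_congr rfl fun k _ => by rw [dotProduct_comm x (e k), sq]
    have hbound : x ⬝ᵥ (ensCov J zt *ᵥ x) ≤ ensEnergy J zt * enormSq x := by
      rw [hxC, ensEnergy]
      have : ∑ k, (e k ⬝ᵥ x)^2 ≤ (∑ k, enormSq (e k)) * enormSq x := by
        rw [Finset.sum_mul]
        exact Finset.sum_le_sum fun k _ => dot_sq_le (e k) x
      calc (J:ℝ)⁻¹ * ∑ k, (e k ⬝ᵥ x)^2
          ≤ (J:ℝ)⁻¹ * ((∑ k, enormSq (e k)) * enormSq x) :=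
            mul_le_mul_of_nonneg_left this (by positivity)
        _ = (J:ℝ)⁻¹ * (∑ k, enormSq (ensSpread J zt k)) * enormSq x := by rw [mul_assoc]
    have hEc : ensEnergy J zt * enormSq x ≤ c * enormSq x :=
      mul_le_mul_of_nonneg_right hc (enormSq_nonneg x)
    linarith

end DEKIaux

set_option maxHeartbeats 1000000 in
theorem deki_ensemble_collapse_upper
    {d p J : ℕ} (hd : 0 < d) (hp : 0 < p) (hJ : 0 < J)
    (α h Amax : ℝ) (hα : 0 < α) (hh : 0 < h) (hAmax : 0 < Amax)
    (S : ℕ → Matrix (Fin p) (Fin d) ℝ) (u : ℕ → Fin p → ℝ)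
    (z : ℕ → Fin J → Fin d → ℝ)
    (hupd : ∀ t j, z (t+1) j = z t j -
      h • ((ensCov J (z t)) *ᵥ ((S (t+1))ᵀ *ᵥ ((S (t+1)) *ᵥ (z t j) - u (t+1)) + α • z t j)))
    (hA : ∀ t : ℕ, 1 ≤ t → opNorm ((S t)ᵀ * (S t)) ≤ Amax)
    (hE0 : 0 < ensEnergy J (z 0))
    (hstep : h ≤ min (α / ((J:ℝ) * (Amax + α)^2)) ((J:ℝ)/α) * (ensEnergy J (z 0))⁻¹) :
    ∀ t : ℕ,
      ensEnergy J (z t) ≤ (J:ℝ) / (h * α * ((t:ℝ) + 1)) ∧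
      (((J:ℝ) / (h * α * ((t:ℝ) + 1))) • (1 : Matrix (Fin d) (Fin d) ℝ)
        - ensCov J (z t)).PosSemidef := by
  have hJR : (0:ℝ) < (J:ℝ) := Nat.cast_pos.mpr hJ
  set E0 := ensEnergy J (z 0) with hE0def
  have hAα : (0:ℝ) < (Amax + α)^2 := by positivity
  have hmin1 : h ≤ α / ((J:ℝ) * (Amax + α)^2) * E0⁻¹ :=
    le_trans hstep (mul_le_mul_of_nonneg_right (min_le_left _ _) (by positivity))
  have hmin2 : h ≤ (J:ℝ)/α * E0⁻¹ :=
    le_trans hstep (mul_le_mul_of_nonneg_right (min_le_right _ _) (by positivity))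
  have hstep1 : h * α * E0 ≤ J := by
    have h2 := mul_le_mul_of_nonneg_right hmin2 hE0.le
    rw [mul_assoc, inv_mul_cancel₀ hE0.ne', mul_one] at h2
    calc h*α*E0 = (h*E0)*α := by ring
      _ ≤ ((J:ℝ)/α)*α := mul_le_mul_of_nonneg_right h2 hα.le
      _ = J := by field_simp
  have hstep2 : h * (Amax+α)^2 * E0 * J ≤ α := by
    have h2 := mul_le_mul_of_nonneg_right hmin1 hE0.le
    rw [mul_assoc, inv_mul_cancel₀ hE0.ne', mul_one] at h2
    calc h*(Amax+α)^2*E0*J = (h*E0)*((Amax+α)^2*(J:ℝ)) := by ring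
      _ ≤ (α / ((J:ℝ)*(Amax+α)^2))*((Amax+α)^2*(J:ℝ)) :=
          mul_le_mul_of_nonneg_right h2 (by positivity)
      _ = α := by
          rw [div_mul_eq_mul_div, mul_comm ((Amax+α)^2) ((J:ℝ)), mul_div_assoc,
            div_self (by positivity : ((J:ℝ)*(Amax+α)^2) ≠ 0), mul_one]
  have key : ∀ t : ℕ, ensEnergy J (z t) ≤ E0 ∧
      h*α*((t:ℝ)+1)*ensEnergy J (z t) ≤ J := by
    intro t
    induction t with
    | zero =>
      refine ⟨le_rfl, ?_⟩
      push_cast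
      nlinarith [hstep1]
    | succ t ih =>
      have hsp := fun j => DEKIaux.spread_update hJ α h (S (t+1)) (u (t+1)) (z t) (z (t+1))
        (ensCov J (z t)) (hupd t) j
      have hrec := DEKIaux.energy_step hJ hα hh (S (t+1)) (hA (t+1) (by omega))
        (z t) (z (t+1)) hsp
      set Et := ensEnergy J (z t) with hEt
      set Et1 := ensEnergy J (z (t+1)) with hEt1
      clear_value Et Et1
      have hEt0 : 0 ≤ Et := hEt ▸ DEKIaux.energy_nonneg (z t)
      have hEt10 : 0 ≤ Et1 := hEt1 ▸ DEKIaux.energy_nonneg (z (t+1))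
      have hcond : h*(Amax+α)^2*Et ≤ α/(J:ℝ) := by
        rw [le_div_iff₀ hJR]
        calc h*(Amax+α)^2*Et*(J:ℝ) ≤ h*(Amax+α)^2*E0*(J:ℝ) := by
              nlinarith [mul_nonneg (mul_nonneg (mul_nonneg hh.le hAα.le)
                (sub_nonneg.mpr ih.1)) hJR.le]
          _ ≤ α := hstep2
      have hrec2 : Et1 ≤ Et - h*α*Et^2/(J:ℝ) := by
        have hq : h^2*(Amax+α)^2*Et^3 ≤ h*α*Et^2/(J:ℝ) := by
          have h1 : h^2*(Amax+α)^2*Et^3 = (h*(Amax+α)^2*Et)*(h*Et^2) := by ring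
          have h2 : (h*(Amax+α)^2*Et)*(h*Et^2) ≤ (α/(J:ℝ))*(h*Et^2) :=
            mul_le_mul_of_nonneg_right hcond (by positivity)
          have h3 : (α/(J:ℝ))*(h*Et^2) = h*α*Et^2/(J:ℝ) := by ring
          linarith
        have h4 : 2*h*α*Et^2/(J:ℝ) = 2*(h*α*Et^2/(J:ℝ)) := by ring
        rw [h4] at hrec
        linarith [hrec, hq]
      have hb : h*α*Et ≤ J := by
        nlinarith [ih.2, mul_nonneg (mul_nonneg (mul_nonneg hh.le hα.le) hEt0)
          (Nat.cast_nonneg (α := ℝ) t)]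
      constructor
      · have hnn : 0 ≤ h*α*Et^2/(J:ℝ) := by positivity
        linarith [ih.1]
      · push_cast
        have h1 : h*α*((t:ℝ)+1+1)*Et1 ≤ h*α*((t:ℝ)+1+1)*(Et - h*α*Et^2/(J:ℝ)) := by
          apply mul_le_mul_of_nonneg_left hrec2 (by positivity)
        have h2 : h*α*((t:ℝ)+1+1)*(Et - h*α*Et^2/(J:ℝ)) ≤ J := by
          rw [show h*α*((t:ℝ)+1+1)*(Et - h*α*Et^2/(J:ℝ))
              = (h*α*((t:ℝ)+1+1)*(Et*(J:ℝ) - h*α*Et^2))/(J:ℝ) by field_simp,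
            div_le_iff₀ hJR]
          nlinarith [mul_nonneg (sub_nonneg.mpr hb) (sub_nonneg.mpr ih.2),
            sq_nonneg (h*α*Et)]
        linarith
  intro t
  have hk := key t
  have hpos : (0:ℝ) < h*α*((t:ℝ)+1) := by positivity
  have hbound : ensEnergy J (z t) ≤ (J:ℝ)/(h*α*((t:ℝ)+1)) := by
    rw [le_div_iff₀ hpos]
    nlinarith [hk.2]
  exact ⟨hbound, DEKIaux.cov_psd_bound hJ (z t) hbound⟩
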